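/- Let d be an even positive integer, let 0 < ε ≤ 1/8, let Θ be the diagonal d×d matrix with k-th diagonal entry (−1)^k (k = 1, …, d) and ρ0 = (I_d + 8εΘ)/d. Then for any d×d unitary matrices U_1, …, U_N, setting ρ_i = U_i ρ0 U_iᴴ and ρ̄ = (1/N) Σ_{j=1}^N ρ_j, one has (1/N) Σ_{i=1}^N ‖ρ_i − ρ̄‖₁ ≥ 8ε − (1/N²) Σ_{i=1}^N Σ_{j=1}^N Re Tr[Θ U_iᴴ U_j ρ0 U_jᴴ U_i]. -/

import Mathlib

open Matrix Finset
open scoped ComplexOrder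

/-- The trace norm `‖A‖₁ = Tr √(Aᴴ A)` of a complex matrix. -/
noncomputable def traceNorm {d : ℕ} (A : Matrix (Fin d) (Fin d) ℂ) : ℝ :=
  (((Matrix.posSemidef_conjTranspose_mul_self A).1.eigenvectorUnitary *
      Matrix.diagonal (((↑) : ℝ → ℂ) ∘ (Real.sqrt ·) ∘
        (Matrix.posSemidef_conjTranspose_mul_self A).1.eigenvalues) *
      (star (Matrix.posSemidef_conjTranspose_mul_self A).1.eigenvectorUnitary :
        Matrix (Fin d) (Fin d) ℂ)).trace).re

/-- The diagonal matrix `Θ` whose `k`-th diagonal entry is `(−1)^k`, `k = 1, …, d`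
(index `k : Fin d` corresponds to the `(k+1)`-st entry). -/
noncomputable def Theta (d : ℕ) : Matrix (Fin d) (Fin d) ℂ :=
  Matrix.diagonal fun k => (-1 : ℂ) ^ ((k : ℕ) + 1)

/-- The state `ρ0 = (I_d + 8 ε Θ)/d`. -/
noncomputable def rho0 (d : ℕ) (ε : ℝ) : Matrix (Fin d) (Fin d) ℂ :=
  ((d : ℂ))⁻¹ • (1 + ((8 * ε : ℝ) : ℂ) • Theta d)


lemma unitary_entry_abs_le_one {d : ℕ} {M : Matrix (Fin d) (Fin d) ℂ}
    (hM : M ∈ Matrix.unitaryGroup (Fin d) ℂ) (k : Fin d) : ‖M k k‖ ≤ 1 := by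
  have h1 : (star M * M) k k = 1 := by
    rw [(Matrix.mem_unitaryGroup_iff').mp hM]; simp
  have h2 : ∑ j, Complex.normSq (M j k) = 1 := by
    have := congrArg Complex.re h1
    simpa [Matrix.mul_apply, Matrix.star_apply, Complex.mul_re, Complex.normSq_apply,
      mul_comm] using this
  have h3 : Complex.normSq (M k k) ≤ 1 := by
    rw [← h2]
    exact Finset.single_le_sum (f := fun j => Complex.normSq (M j k))
      (fun j _ => Complex.normSq_nonneg _) (Finset.mem_univ k)
  have := Complex.sq_norm (M k k)
  nlinarith [norm_nonneg (M k k)]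

open scoped MatrixOrder in
lemma re_trace_mul_le_traceNorm {d : ℕ} {A B : Matrix (Fin d) (Fin d) ℂ}
    (hA : A.IsHermitian) (hB : B ∈ Matrix.unitaryGroup (Fin d) ℂ) :
    ((B * A).trace).re ≤ traceNorm A := by
  set P : Matrix (Fin d) (Fin d) ℂ := (hA.eigenvectorUnitary : Matrix (Fin d) (Fin d) ℂ)
  have hPmem : P ∈ Matrix.unitaryGroup (Fin d) ℂ := hA.eigenvectorUnitary.2
  have hPP : star P * P = 1 := (Matrix.mem_unitaryGroup_iff').mp hPmem
  set lam := hA.eigenvalues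
  have hspec : A = P * diagonal (RCLike.ofReal ∘ lam) * star P := hA.spectral_theorem
  -- the square root of AᴴA
  set S : Matrix (Fin d) (Fin d) ℂ := P * diagonal (fun k => ((|lam k| : ℝ) : ℂ)) * star P with hSdef
  have hSpsd : S.PosSemidef :=
    (Matrix.posSemidef_diagonal_iff.mpr fun i =>
      Complex.zero_le_real.mpr (abs_nonneg _)).mul_mul_conjTranspose_same P
  have conj_mul : ∀ D1 D2 : Matrix (Fin d) (Fin d) ℂ,
      (P * D1 * star P) * (P * D2 * star P) = P * (D1 * D2) * star P := by
    intro D1 D2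
    simp only [Matrix.mul_assoc]
    rw [← Matrix.mul_assoc (star P) P (D2 * star P), hPP, one_mul]
  have hSsq : S ^ 2 = Aᴴ * A := by
    rw [hA.eq, hspec, pow_two, hSdef, conj_mul, conj_mul, Matrix.diagonal_mul_diagonal,
      Matrix.diagonal_mul_diagonal]
    congr 2
    funext k
    simp [Function.comp, ← Complex.ofReal_mul, abs_mul_abs_self]
  have hsqrt : ((Matrix.posSemidef_conjTranspose_mul_self A).1.eigenvectorUnitary *
      Matrix.diagonal (((↑) : ℝ → ℂ) ∘ (Real.sqrt ·) ∘
        (Matrix.posSemidef_conjTranspose_mul_self A).1.eigenvalues) *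
      (star (Matrix.posSemidef_conjTranspose_mul_self A).1.eigenvectorUnitary :
        Matrix (Fin d) (Fin d) ℂ)) = S := by
    have e1 : CFC.sqrt (Aᴴ * A) = S :=
      CFC.sqrt_unique (by rw [← pow_two, hSsq]) hSpsd.nonneg
    rw [← e1, CFC.sqrt_eq_real_sqrt _ (Matrix.posSemidef_conjTranspose_mul_self A).nonneg,
      cfcₙ_eq_cfc (hf0 := Real.sqrt_zero), (Matrix.posSemidef_conjTranspose_mul_self A).1.cfc_eq, IsHermitian.cfc,
      Unitary.conjStarAlgAut_apply]
    rfl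
  have htrS : S.trace = ∑ k, ((|lam k| : ℝ) : ℂ) := by
    rw [hSdef, Matrix.trace_mul_cycle, hPP, one_mul, Matrix.trace_diagonal]
  -- compute the trace of B * A
  set M : Matrix (Fin d) (Fin d) ℂ := star P * B * P with hMdef
  have hMmem : M ∈ Matrix.unitaryGroup (Fin d) ℂ := by
    exact Submonoid.mul_mem _ (Submonoid.mul_mem _ (Unitary.star_mem hPmem) hB) hPmem
  have htrBA : (B * A).trace = ∑ k, M k k * ((lam k : ℝ) : ℂ) := by
    rw [hspec, ← Matrix.mul_assoc, ← Matrix.mul_assoc, Matrix.trace_mul_cycle,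
      ← Matrix.mul_assoc, ← hMdef]
    rw [Matrix.trace]
    congr 1
    funext k
    simp [Matrix.diag, Matrix.mul_apply, Matrix.diagonal_apply, Function.comp]
  rw [traceNorm, hsqrt, htrS, htrBA]
  simp only [Complex.re_sum, Complex.mul_re, Complex.ofReal_re, Complex.ofReal_im, mul_zero,
    sub_zero]
  refine Finset.sum_le_sum fun k _ => ?_
  have h2 : ‖M k k‖ ≤ 1 := unitary_entry_abs_le_one hMmem k
  have hre : |(M k k).re| ≤ 1 := le_trans (Complex.abs_re_le_norm _) h2
  calc (M k k).re * lam k ≤ |(M k k).re * lam k| := le_abs_self _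
    _ = |(M k k).re| * |lam k| := abs_mul _ _
    _ ≤ 1 * |lam k| := mul_le_mul_of_nonneg_right hre (abs_nonneg _)
    _ = |lam k| := one_mul _

lemma theta_mul_theta (d : ℕ) : Theta d * Theta d = 1 := by
  rw [Theta, Matrix.diagonal_mul_diagonal]
  have h : (fun i : Fin d => (-1 : ℂ) ^ ((i : ℕ) + 1) * (-1) ^ ((i : ℕ) + 1))
      = fun _ => (1 : ℂ) := by
    funext i
    rw [← pow_add]
    exact Even.neg_one_pow ⟨(i : ℕ) + 1, by ring⟩
  rw [h, Matrix.diagonal_one]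

lemma theta_isHermitian (d : ℕ) : (Theta d).IsHermitian := by
  rw [Matrix.IsHermitian, Theta, Matrix.diagonal_conjTranspose]
  have h : (star fun k : Fin d => (-1 : ℂ) ^ ((k : ℕ) + 1))
      = fun k : Fin d => (-1 : ℂ) ^ ((k : ℕ) + 1) := by
    funext k
    simp only [Pi.star_apply, star_pow, star_neg, star_one]
  rw [h]

lemma theta_mem_unitary (d : ℕ) : Theta d ∈ Matrix.unitaryGroup (Fin d) ℂ := by
  rw [Matrix.mem_unitaryGroup_iff']
  rw [Matrix.star_eq_conjTranspose, (theta_isHermitian d).eq, theta_mul_theta]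

lemma theta_trace (d : ℕ) (hdeven : Even d) : (Theta d).trace = 0 := by
  rw [Theta, Matrix.trace_diagonal, Fin.sum_univ_eq_sum_range (fun k => (-1 : ℂ) ^ (k + 1)) d]
  have : ∀ k : ℕ, (-1 : ℂ) ^ (k + 1) = -((-1) ^ k) := fun k => by ring
  simp_rw [this, Finset.sum_neg_distrib, neg_one_geom_sum, if_pos hdeven, neg_zero]

lemma rho0_isHermitian (d : ℕ) (ε : ℝ) : (rho0 d ε).IsHermitian := by
  rw [Matrix.IsHermitian, rho0, Matrix.conjTranspose_smul, Matrix.conjTranspose_add,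
    Matrix.conjTranspose_one, Matrix.conjTranspose_smul, (theta_isHermitian d).eq]
  simp [Complex.conj_ofReal, star_inv₀]

lemma trace_theta_rho0 (d : ℕ) (hd : 0 < d) (hdeven : Even d) (ε : ℝ) :
    (Theta d * rho0 d ε).trace = ((8 * ε : ℝ) : ℂ) := by
  have hd0 : (d : ℂ) ≠ 0 := Nat.cast_ne_zero.mpr hd.ne'
  rw [rho0, Matrix.mul_smul, Matrix.mul_add, Matrix.mul_one, Matrix.mul_smul, theta_mul_theta,
    Matrix.trace_smul, Matrix.trace_add, theta_trace d hdeven, Matrix.trace_smul,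
    Matrix.trace_one]
  simp only [zero_add, smul_eq_mul, Fintype.card_fin]
  field_simp

/-- For unitaries `U₁, …, U_N`, with `ρᵢ = Uᵢ ρ0 Uᵢᴴ` and `ρ̄` their average,
`(1/N) Σᵢ ‖ρᵢ − ρ̄‖₁ ≥ 8ε − (1/N²) Σᵢⱼ Re Tr[Θ Uᵢᴴ Uⱼ ρ0 Uⱼᴴ Uᵢ]`. -/
theorem mean_traceDist_lower_bound (d N : ℕ) (hd : 0 < d) (hdeven : Even d) (hN : 0 < N)
    (ε : ℝ) (hε : 0 < ε) (hε8 : ε ≤ 1 / 8)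
    (U : Fin N → Matrix (Fin d) (Fin d) ℂ)
    (hU : ∀ i, U i ∈ Matrix.unitaryGroup (Fin d) ℂ) :
    8 * ε - ((N : ℝ) ^ 2)⁻¹ *
        ∑ i, ∑ j, ((Theta d * (U i)ᴴ * U j * rho0 d ε * (U j)ᴴ * U i).trace).re
      ≤ (N : ℝ)⁻¹ *
        ∑ i, traceNorm (U i * rho0 d ε * (U i)ᴴ
          - ((N : ℂ))⁻¹ • ∑ j, U j * rho0 d ε * (U j)ᴴ) := by
  have hN0 : (N : ℝ) ≠ 0 := Nat.cast_ne_zero.mpr hN.ne'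
  set ρ : Fin N → Matrix (Fin d) (Fin d) ℂ := fun i => U i * rho0 d ε * (U i)ᴴ with hρdef
  set ρbar : Matrix (Fin d) (Fin d) ℂ := ((N : ℂ))⁻¹ • ∑ j, ρ j with hρbardef
  set B : Fin N → Matrix (Fin d) (Fin d) ℂ := fun i => U i * Theta d * (U i)ᴴ with hBdef
  have hUU : ∀ i, (U i)ᴴ * U i = 1 := fun i => by
    have := Matrix.mem_unitaryGroup_iff'.mp (hU i)
    rwa [Matrix.star_eq_conjTranspose] at this
  have hBmem : ∀ i, B i ∈ Matrix.unitaryGroup (Fin d) ℂ := fun i => by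
    rw [hBdef]
    exact Submonoid.mul_mem _ (Submonoid.mul_mem _ (hU i) (theta_mem_unitary d))
      (Unitary.star_mem (hU i))
  have hρherm : ∀ i, (ρ i).IsHermitian := fun i => by
    rw [hρdef, Matrix.IsHermitian]
    simp [Matrix.conjTranspose_mul, Matrix.mul_assoc, (rho0_isHermitian d ε).eq]
  have hρbarherm : ρbar.IsHermitian := by
    rw [hρbardef, Matrix.IsHermitian, Matrix.conjTranspose_smul, Matrix.conjTranspose_sum]
    simp only [fun i => (hρherm i).eq]
    congr 1
    simp [star_inv₀]
  have htr : ∀ i j, (B i * ρ j).trace =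
      (Theta d * (U i)ᴴ * U j * rho0 d ε * (U j)ᴴ * U i).trace := by
    intro i j
    rw [show B i * ρ j = U i * (Theta d * (U i)ᴴ * U j * rho0 d ε * (U j)ᴴ) from by
      simp only [hBdef, hρdef, Matrix.mul_assoc], Matrix.trace_mul_comm]
  have htrii : ∀ i, (B i * ρ i).trace = ((8 * ε : ℝ) : ℂ) := by
    intro i
    rw [show B i * ρ i = U i * (Theta d * ((U i)ᴴ * U i) * (rho0 d ε * (U i)ᴴ)) from by
      simp only [hBdef, hρdef, Matrix.mul_assoc], hUU i, Matrix.mul_one,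
      Matrix.trace_mul_comm]
    rw [show Theta d * (rho0 d ε * (U i)ᴴ) * U i = Theta d * (rho0 d ε * ((U i)ᴴ * U i)) from by
      simp only [Matrix.mul_assoc], hUU i, Matrix.mul_one]
    exact trace_theta_rho0 d hd hdeven ε
  have key : ∀ i, 8 * ε - (N : ℝ)⁻¹ *
      ∑ j, ((Theta d * (U i)ᴴ * U j * rho0 d ε * (U j)ᴴ * U i).trace).re
      ≤ traceNorm (ρ i - ρbar) := by
    intro i
    have hherm : (ρ i - ρbar).IsHermitian := (hρherm i).sub hρbarherm
    have h := re_trace_mul_le_traceNorm hherm (hBmem i)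
    have hcomp : ((B i * (ρ i - ρbar)).trace).re = 8 * ε - (N : ℝ)⁻¹ *
        ∑ j, ((Theta d * (U i)ᴴ * U j * rho0 d ε * (U j)ᴴ * U i).trace).re := by
      rw [Matrix.mul_sub, Matrix.trace_sub, Complex.sub_re, htrii i, Complex.ofReal_re]
      congr 1
      rw [hρbardef, Matrix.mul_smul, Matrix.mul_sum, Matrix.trace_smul, Matrix.trace_sum]
      simp_rw [htr i]
      rw [show ((N : ℂ))⁻¹ = (((N : ℝ)⁻¹ : ℝ) : ℂ) from by push_cast; ring]
      rw [smul_eq_mul, Complex.re_ofReal_mul, Complex.re_sum]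
    rw [hcomp] at h
    exact h
  have hsum := Finset.sum_le_sum (fun i (_ : i ∈ univ) => key i)
  rw [Finset.sum_sub_distrib, Finset.sum_const, Finset.card_univ, Fintype.card_fin,
    ← Finset.mul_sum] at hsum
  have h2 := mul_le_mul_of_nonneg_left hsum (inv_nonneg.mpr (Nat.cast_nonneg N) : (0:ℝ) ≤ (N:ℝ)⁻¹)
  calc 8 * ε - ((N : ℝ) ^ 2)⁻¹ *
        ∑ i, ∑ j, ((Theta d * (U i)ᴴ * U j * rho0 d ε * (U j)ᴴ * U i).trace).re
      = (N : ℝ)⁻¹ * ((N : ℕ) • (8 * ε) - (N : ℝ)⁻¹ *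
        ∑ i, ∑ j, ((Theta d * (U i)ᴴ * U j * rho0 d ε * (U j)ᴴ * U i).trace).re) := by
        rw [nsmul_eq_mul]; field_simp
    _ ≤ (N : ℝ)⁻¹ * ∑ i, traceNorm (ρ i - ρbar) := h2
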